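/- Observability Invariant: in the λ♦-calculus, term typing always assigns observable qualifiers, i.e., if Γ|Σ ⊢^φ t : T^q then q ⊆ {♦} ∪ φ. -/
import Mathlib


set_option linter.unusedVariables false

/-! A formalization of the λ♦-calculus (reachability types with a
    freshness marker), following Wei et al., "Polymorphic Reachability
    Types". -/

/-- Atoms occurring in reachability qualifiers: term variables,
    store locations, and the freshness marker ♦. -/
inductive Atom : Type
  | var : ℕ → Atom
  | loc : ℕ → Atom
  | fresh : Atom
deriving DecidableEq

/-- Reachability qualifiers: finite sets of atoms. -/
abbrev Qual := Finset Atom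

/-- Qualifier substitution q[p/x]. -/
def qsubst (q : Qual) (x : ℕ) (p : Qual) : Qual :=
  if Atom.var x ∈ q then (q.erase (Atom.var x)) ∪ p else q

/-- Qualifier growth q[p/♦]. -/
def qgrow (q p : Qual) : Qual :=
  if Atom.fresh ∈ q then q ∪ p else q

/-- Types of λ♦: base type, unit, dependent function types
    f(x : S^p) → T^r, and reference types Ref (T^p). -/
inductive Ty : Type
  | base : Ty
  | unit : Ty
  | fn (f x : ℕ) (S : Ty) (p : Qual) (T : Ty) (r : Qual) : Ty
  | ref (T : Ty) (p : Qual) : Ty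
deriving DecidableEq

/-- Qualified types T^q. -/
abbrev QTy := Ty × Qual

/-- Substitution of a qualifier for a variable inside a type. -/
def tsubst : Ty → ℕ → Qual → Ty
  | .base, _, _ => .base
  | .unit, _, _ => .unit
  | .fn f y S p T r, x, q =>
      .fn f y (tsubst S x q) (qsubst p x q) (tsubst T x q) (qsubst r x q)
  | .ref T p, x, q => .ref (tsubst T x q) (qsubst p x q)

/-- Substitution on qualified types. -/
def qtsubst (Q : QTy) (x : ℕ) (p : Qual) : QTy :=
  (tsubst Q.1 x p, qsubst Q.2 x p)

/-- Term variables mentioned in a qualifier. -/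
def qfv (q : Qual) : Finset ℕ :=
  q.biUnion (fun a => match a with | .var n => {n} | _ => ∅)

/-- Free term variables of a type (occurring in qualifiers). -/
def tfv : Ty → Finset ℕ
  | .base => ∅
  | .unit => ∅
  | .fn f x S p T r => (tfv S ∪ qfv p ∪ tfv T ∪ qfv r) \ {f, x}
  | .ref T p => tfv T ∪ qfv p

/-- Typing contexts: lists of (variable, qualified type). -/
abbrev Ctx := List (ℕ × QTy)

/-- Store typings: lists of (location, qualified type). -/
abbrev StoreTy := List (ℕ × QTy)

/-- The variables bound in a typing context, as atoms. -/
def ctxDom (Γ : Ctx) : Finset Atom := (Γ.map (fun p => Atom.var p.1)).toFinset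

/-- The locations bound in a store typing, as atoms. -/
def stDom (St : StoreTy) : Finset Atom := (St.map (fun p => Atom.loc p.1)).toFinset

/-- One-step reachability between atoms, induced by Γ and St. -/
def rstep (Γ : Ctx) (St : StoreTy) (a b : Atom) : Prop :=
  (∃ x T q, a = Atom.var x ∧ (x, (T, q)) ∈ Γ ∧ b ∈ q) ∨
  (∃ l T q, a = Atom.loc l ∧ (l, (T, q)) ∈ St ∧ b ∈ q)

/-- Saturation q*: all atoms reachable from q by the
    reflexive-transitive closure of one-step reachability. -/
def sat (Γ : Ctx) (St : StoreTy) (q : Set Atom) : Set Atom :=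
  {b | ∃ a ∈ q, Relation.ReflTransGen (rstep Γ St) a b}

/-- Qualifier overlap p ⋒ q := {♦} ∪ (p* ∩ q*). -/
def overlap (Γ : Ctx) (St : StoreTy) (p q : Set Atom) : Set Atom :=
  {Atom.fresh} ∪ (sat Γ St p ∩ sat Γ St q)

/-- Qualifier subtyping Γ|St ⊢ p <: q. -/
inductive QSub (Γ : Ctx) (St : StoreTy) : Qual → Qual → Prop
  /-- q-sub: subset inclusion within the well-scoped qualifiers. -/
  | qsub {p q : Qual} :
      p ⊆ q → q ⊆ insert Atom.fresh (ctxDom Γ ∪ stDom St) →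
      QSub Γ St p q
  /-- q-self: abstracting captured qualifiers by a self-reference. -/
  | qself {p q : Qual} {T : Ty} {f : ℕ} :
      (f, (T, q)) ∈ Γ → Atom.fresh ∉ q →
      QSub Γ St (p ∪ q ∪ {Atom.var f}) (p ∪ {Atom.var f})
  /-- q-var: one-step upcast of a variable to its assumed qualifier. -/
  | qvar {p q : Qual} {T : Ty} {x : ℕ} :
      (x, (T, q)) ∈ Γ → Atom.fresh ∉ q →
      QSub Γ St (p ∪ {Atom.var x}) (p ∪ q)
  /-- q-trans: transitivity. -/
  | qtrans {p q r : Qual} : QSub Γ St p q → QSub Γ St q r → QSub Γ St p r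

mutual
  /-- Subtyping on ordinary types Γ|St ⊢ S <: T. -/
  inductive TSub : Ctx → StoreTy → Ty → Ty → Prop
    /-- s-base -/
    | base {Γ St} : TSub Γ St .base .base
    | unit {Γ St} : TSub Γ St .unit .unit
    /-- s-ref: invariant referent. -/
    | ref {Γ St S T} {q : Qual} :
        TSub Γ St S T → TSub Γ St T S → q ⊆ ctxDom Γ ∪ stDom St →
        TSub Γ St (.ref S q) (.ref T q)
    /-- s-fun: contravariant domain, covariant dependent codomain,
        context extended with the smaller argument type and a
        ♦-qualified self-reference. -/
    | fn {Γ St} {f x : ℕ} {S1 T1 S2 T2 : Ty} {p1 r1 p2 r2 : Qual} :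
        QTSub Γ St (S2, p2) (S1, p1) →
        QTSub ((x, (S2, p2)) ::
               (f, (.fn f x S1 p1 T1 r1, {Atom.fresh})) :: Γ) St
              (T1, r1) (T2, r2) →
        TSub Γ St (.fn f x S1 p1 T1 r1) (.fn f x S2 p2 T2 r2)

  /-- Subtyping on qualified types (sq-sub). -/
  inductive QTSub : Ctx → StoreTy → QTy → QTy → Prop
    | sq {Γ St S T} {p q : Qual} :
        TSub Γ St S T → QSub Γ St p q → QTSub Γ St (S, p) (T, q)
end

/-- Terms of λ♦. -/
inductive Tm : Type
  | cst : Tm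
  | unitv : Tm
  | var (x : ℕ) : Tm
  | loc (l : ℕ) : Tm
  | abs (f x : ℕ) (t : Tm) : Tm
  | app (t1 t2 : Tm) : Tm
  | ref (t : Tm) : Tm
  | deref (t : Tm) : Tm
  | assign (t1 t2 : Tm) : Tm
deriving DecidableEq

/-- Term typing Γ|St ⊢^φ t : T^q. -/
inductive HasType : Ctx → StoreTy → Finset Atom → Tm → QTy → Prop
  /-- t-var -/
  | var {Γ St φ x T} {q : Qual} :
      (x, (T, q)) ∈ Γ → Atom.var x ∈ φ →
      HasType Γ St φ (.var x) (T, {Atom.var x})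
  /-- t-cst -/
  | cst {Γ St φ} : HasType Γ St φ .cst (.base, ∅)
  | unitv {Γ St φ} : HasType Γ St φ .unitv (.unit, ∅)
  /-- t-abs -/
  | abs {Γ St φ f x t S T} {p r q : Qual} :
      HasType ((x, (S, p)) :: (f, (.fn f x S p T r, q)) :: Γ) St
        (q ∪ {Atom.var x, Atom.var f}) t (T, r) →
      q ⊆ φ →
      HasType Γ St φ (.abs f x t) (.fn f x S p T r, q)
  /-- t-app (non-fresh argument) -/
  | app {Γ St φ t1 t2 f x S T} {p r q : Qual} :
      HasType Γ St φ t1 (.fn f x S p T r, q) →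
      HasType Γ St φ t2 (S, p) →
      Atom.fresh ∉ p →
      r ⊆ insert Atom.fresh (φ ∪ {Atom.var x, Atom.var f}) →
      HasType Γ St φ (.app t1 t2) (qtsubst (qtsubst (T, r) x p) f q)
  /-- t-app♦ (growing argument; domain is the observable overlap) -/
  | appFresh {Γ St φ t1 t2 f x S T} {d p r q : Qual} :
      HasType Γ St φ t1 (.fn f x S d T r, q) →
      HasType Γ St φ t2 (S, p) →
      (↑d : Set Atom) = overlap Γ St ↑p ↑q →
      (Atom.fresh ∈ p → x ∉ tfv T) →
      (Atom.fresh ∈ q → f ∉ tfv T) →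
      r ⊆ insert Atom.fresh (φ ∪ {Atom.var x, Atom.var f}) →
      HasType Γ St φ (.app t1 t2) (qtsubst (qtsubst (T, r) x p) f q)
  /-- t-ref -/
  | ref {Γ St φ t T} {q : Qual} :
      HasType Γ St φ t (T, q) → Atom.fresh ∉ q →
      HasType Γ St φ (.ref t) (.ref T q, insert Atom.fresh q)
  /-- t-deref -/
  | deref {Γ St φ t T} {p q : Qual} :
      HasType Γ St φ t (.ref T p, q) → Atom.fresh ∉ p → p ⊆ φ →
      HasType Γ St φ (.deref t) (T, p)
  /-- t-assgn -/
  | assign {Γ St φ t1 t2 T} {p q : Qual} :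
      HasType Γ St φ t1 (.ref T p, q) →
      HasType Γ St φ t2 (T, p) → Atom.fresh ∉ p →
      HasType Γ St φ (.assign t1 t2) (.unit, ∅)
  /-- t-sub -/
  | sub {Γ St φ t Q T} {q : Qual} :
      HasType Γ St φ t Q → QTSub Γ St Q (T, q) →
      q ⊆ insert Atom.fresh φ →
      HasType Γ St φ t (T, q)
  /-- t-loc -/
  | loc {Γ St φ l T} {q : Qual} :
      (l, (T, q)) ∈ St → q ⊆ stDom St → tfv T = ∅ →
      insert (Atom.loc l) q ⊆ φ →
      HasType Γ St φ (.loc l) (.ref T q, insert (Atom.loc l) q)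

/-- Values. -/
def IsValue : Tm → Prop
  | .cst => True
  | .unitv => True
  | .loc _ => True
  | .abs _ _ _ => True
  | _ => False

/-- Capture-avoiding-enough term substitution t[v/x] (values are closed). -/
def tmsubst : Tm → ℕ → Tm → Tm
  | .var y, x, v => if y = x then v else .var y
  | .abs f y t, x, v =>
      if f = x ∨ y = x then .abs f y t else .abs f y (tmsubst t x v)
  | .app a b, x, v => .app (tmsubst a x v) (tmsubst b x v)
  | .ref t, x, v => .ref (tmsubst t x v)
  | .deref t, x, v => .deref (tmsubst t x v)
  | .assign a b, x, v => .assign (tmsubst a x v) (tmsubst b x v)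
  | .cst, _, _ => .cst
  | .unitv, _, _ => .unitv
  | .loc l, _, _ => .loc l

/-- Runtime stores: lists of (location, value); lookup takes the
    first (most recent) binding. -/
abbrev Store := List (ℕ × Tm)

/-- Call-by-value reduction t | σ → t' | σ'. -/
inductive Step : Tm → Store → Tm → Store → Prop
  /-- β -/
  | beta {f x t v σ} : IsValue v →
      Step (.app (.abs f x t) v) σ
           (tmsubst (tmsubst t x v) f (.abs f x t)) σ
  /-- ref -/
  | ref {v σ l} : IsValue v → l ∉ σ.map Prod.fst →
      Step (.ref v) σ (.loc l) ((l, v) :: σ)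
  /-- deref -/
  | deref {l v σ} : List.lookup l σ = some v →
      Step (.deref (.loc l)) σ v σ
  /-- assign -/
  | assign {l v σ} : IsValue v → l ∈ σ.map Prod.fst →
      Step (.assign (.loc l) v) σ .unitv ((l, v) :: σ)
  /-- congruence rules (evaluation contexts) -/
  | appL {t1 σ t1' σ' t2} : Step t1 σ t1' σ' →
      Step (.app t1 t2) σ (.app t1' t2) σ'
  | appR {v t2 σ t2' σ'} : IsValue v → Step t2 σ t2' σ' →
      Step (.app v t2) σ (.app v t2') σ'
  | refC {t σ t' σ'} : Step t σ t' σ' → Step (.ref t) σ (.ref t') σ'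
  | derefC {t σ t' σ'} : Step t σ t' σ' → Step (.deref t) σ (.deref t') σ'
  | assignL {t1 σ t1' σ' t2} : Step t1 σ t1' σ' →
      Step (.assign t1 t2) σ (.assign t1' t2) σ'
  | assignR {v t2 σ t2' σ'} : IsValue v → Step t2 σ t2' σ' →
      Step (.assign v t2) σ (.assign v t2') σ'

/-- Store well-typedness ∅|St ⊢ σ. -/
def StoreWT (St : StoreTy) (σ : Store) : Prop :=
  σ.map Prod.fst = St.map Prod.fst ∧
  ∀ l v, List.lookup l σ = some v →
    ∃ T q, List.lookup l St = some (T, q) ∧ IsValue v ∧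
      HasType [] St (stDom St) v (T, q)

/-- Well-formed store typings: every entry is closed and has a
    transitively closed qualifier of store locations. -/
def WfStoreTy (St : StoreTy) : Prop :=
  ∀ l T (q : Qual), (l, (T, q)) ∈ St →
    tfv T = ∅ ∧ q ⊆ stDom St ∧ sat [] St ↑q = ↑q

/-- Substitution on typing contexts. -/
def csubst (Γ : Ctx) (x : ℕ) (p : Qual) : Ctx :=
  Γ.map (fun e => (e.1, qtsubst e.2 x p))

/-- Substitution θ = [p/x] on (possibly infinite) atom sets. -/
def ssubst (s : Set Atom) (x : ℕ) (p : Qual) : Set Atom :=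
  (s \ {Atom.var x}) ∪ {a | Atom.var x ∈ s ∧ a ∈ (p : Set Atom)}

lemma qsubst_subset (q : Qual) (x : ℕ) (p : Qual) :
    qsubst q x p ⊆ q.erase (Atom.var x) ∪ p := by
  unfold qsubst
  split
  · exact fun a ha => ha
  · intro a ha
    rcases eq_or_ne a (Atom.var x) with rfl | h
    · simp_all
    · exact Finset.mem_union_left _ (Finset.mem_erase.mpr ⟨h, ha⟩)

lemma observability_aux {Γ St φ t Q} (h : HasType Γ St φ t Q) :
    Q.2 ⊆ insert Atom.fresh φ := by
  induction h with
  | var hm hx =>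
      intro a ha
      simp only [Finset.mem_singleton] at ha
      subst ha
      exact Finset.mem_insert_of_mem hx
  | cst => simp
  | unitv => simp
  | abs _ hq _ => exact hq.trans (Finset.subset_insert _ _)
  | ref _ hnf ih =>
      exact Finset.insert_subset_insert _ (fun a ha => by
        rcases Finset.mem_insert.mp (ih ha) with rfl | h
        · exact absurd ha hnf
        · exact h)
  | deref _ _ hp => exact hp.trans (Finset.subset_insert _ _)
  | assign _ _ _ => simp
  | sub _ _ hq => exact hq
  | loc _ _ _ hφ => exact hφ.trans (Finset.subset_insert _ _)
  | app h1 h2 hnf hr ih1 ih2 =>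
      intro a ha
      have ha' := qsubst_subset _ _ _ ha
      rcases Finset.mem_union.mp ha' with ha'' | haq
      · have := Finset.mem_of_mem_erase ha''
        have := qsubst_subset _ _ _ this
        rcases Finset.mem_union.mp this with har | hap
        · have hr' := hr (Finset.mem_of_mem_erase har)
          have hax := (Finset.mem_erase.mp har).1
          have haf := (Finset.mem_erase.mp ha'').1
          -- wrong order? ha'' : a ∈ (qsubst r x p).erase (var f)
          rcases Finset.mem_insert.mp hr' with rfl | hmem
          · exact Finset.mem_insert_self _ _
          · rcases Finset.mem_union.mp hmem with hφ' | hxf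
            · exact Finset.mem_insert_of_mem hφ'
            · simp only [Finset.mem_insert, Finset.mem_singleton] at hxf
              rcases hxf with rfl | rfl
              · exact absurd rfl hax
              · exact absurd rfl haf
        · exact ih2 hap
      · exact ih1 haq
  | appFresh h1 h2 hd hp hq hr ih1 ih2 =>
      intro a ha
      have ha' := qsubst_subset _ _ _ ha
      rcases Finset.mem_union.mp ha' with ha'' | haq
      · have := qsubst_subset _ _ _ (Finset.mem_of_mem_erase ha'')
        rcases Finset.mem_union.mp this with har | hap
        · have hr' := hr (Finset.mem_of_mem_erase har)
          have hax := (Finset.mem_erase.mp har).1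
          have haf := (Finset.mem_erase.mp ha'').1
          rcases Finset.mem_insert.mp hr' with rfl | hmem
          · exact Finset.mem_insert_self _ _
          · rcases Finset.mem_union.mp hmem with hφ' | hxf
            · exact Finset.mem_insert_of_mem hφ'
            · simp only [Finset.mem_insert, Finset.mem_singleton] at hxf
              rcases hxf with rfl | rfl
              · exact absurd rfl hax
              · exact absurd rfl haf
        · exact ih2 hap
      · exact ih1 haq

/-- Observability Invariant: term typing always assigns observable
    qualifiers, i.e., if Γ|Σ ⊢^φ t : T^q then q ⊆ {♦} ∪ φ. -/
theorem observability_invariant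
    (Γ : Ctx) (St : StoreTy) (φ : Finset Atom) (t : Tm) (T : Ty) (q : Qual)
    (h : HasType Γ St φ t (T, q)) :
    q ⊆ insert Atom.fresh φ := observability_aux h
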